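/- Let v_l and v_m be two adjacent vertices of a simple connected graph G, and let P_l and P_m be two pendant paths of G of lengths l and m with roots v_l and v_m, respectively, where l > m. Let x = (x_1,...,x_n)^t be a positive eigenvector of the distance matrix D(G) corresponding to the distance spectral radius Λ1(G). Then the sum of the entries of x over the vertices of P_l is strictly greater than the sum of the entries of x over the vertices of P_m, i.e., ∑_{j∈V(P_l)} x_j > ∑_{j∈V(P_m)} x_j. -/

import Mathlib

open Matrix

/-- The distance matrix of a graph: the `(i,j)` entry is the graph distance
between `i` and `j`, as a real number. -/
noncomputable def distMatrix {V : Type} [Fintype V] (G : SimpleGraph V) :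
    Matrix V V ℝ := fun i j => (G.dist i j : ℝ)

/-- The distance spectral radius `Λ₁(G)`: the largest eigenvalue of the distance matrix. -/
noncomputable def distSpectralRadius {V : Type} [Fintype V] (G : SimpleGraph V) : ℝ :=
  sSup {μ : ℝ | ∃ x : V → ℝ, x ≠ 0 ∧ (distMatrix G).mulVec x = μ • x}

/-- `p : Fin (s+1) → V` is a pendant path of length `s ≥ 1` in `G`: the vertices
`p 0, …, p s` are distinct, consecutive ones are adjacent, the root `p 0` has degree
greater than `2`, the endpoint `p s` has degree `1`, and all interior vertices have
degree `2`. -/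
structure IsPendantPath {V : Type} [Fintype V] (G : SimpleGraph V) (s : ℕ)
    (p : Fin (s + 1) → V) : Prop where
  len_pos : 1 ≤ s
  inj : Function.Injective p
  adj : ∀ i : Fin s, G.Adj (p i.castSucc) (p i.succ)
  root_deg : 2 < (G.neighborSet (p 0)).ncard
  last_deg : (G.neighborSet (p (Fin.last s))).ncard = 1
  mid_deg : ∀ i : Fin (s + 1), 0 < (i : ℕ) → (i : ℕ) < s → (G.neighborSet (p i)).ncard = 2

namespace PendantProofAux

variable {V : Type} (G : SimpleGraph V)

/-- ℕ-indexed pendant path data. -/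
structure PP (s : ℕ) (P : ℕ → V) : Prop where
  pos : 1 ≤ s
  inj : ∀ ⦃i j : ℕ⦄, i ≤ s → j ≤ s → P i = P j → i = j
  adj : ∀ i : ℕ, i < s → G.Adj (P i) (P (i + 1))
  root : 2 < (G.neighborSet (P 0)).ncard
  last : (G.neighborSet (P s)).ncard = 1
  mid : ∀ i : ℕ, 0 < i → i < s → (G.neighborSet (P i)).ncard = 2

variable {G}

lemma PP.nbr {s : ℕ} {P : ℕ → V} (h : PP G s P) [Fintype V] :
    ∀ i v, 1 ≤ i → i ≤ s → G.Adj (P i) v →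
      (v = P (i - 1) ∨ (i < s ∧ v = P (i + 1))) := by
  intro i v hi1 his hadj
  rcases eq_or_lt_of_le his with heq | hlt
  · -- i = s : neighborSet = {P (s-1)}
    left
    subst heq
    have hadj' : G.Adj (P i) (P (i - 1)) := by
      have := h.adj (i - 1) (by omega)
      have hs : i - 1 + 1 = i := by omega
      rw [hs] at this
      exact this.symm
    have hsub : ({P (i - 1)} : Set V) ⊆ G.neighborSet (P i) := by
      intro z hz; rcases hz with rfl; exact hadj'
    have heq : ({P (i - 1)} : Set V) = G.neighborSet (P i) := by
      apply Set.eq_of_subset_of_ncard_le hsub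
      rw [h.last, Set.ncard_singleton]
    have : v ∈ G.neighborSet (P i) := hadj
    rw [← heq] at this
    simpa using this
  · -- interior
    have hne : P (i - 1) ≠ P (i + 1) := by
      intro hEq
      have := h.inj (i := i - 1) (j := i + 1) (by omega) (by omega) hEq
      omega
    have hadjm : G.Adj (P i) (P (i - 1)) := by
      have := h.adj (i - 1) (by omega)
      have hs : i - 1 + 1 = i := by omega
      rw [hs] at this
      exact this.symm
    have hadjp : G.Adj (P i) (P (i + 1)) := h.adj i hlt
    have hsub : ({P (i - 1), P (i + 1)} : Set V) ⊆ G.neighborSet (P i) := by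
      intro z hz
      rcases hz with rfl | hz
      · exact hadjm
      · rcases hz with rfl; exact hadjp
    have heq : ({P (i - 1), P (i + 1)} : Set V) = G.neighborSet (P i) := by
      apply Set.eq_of_subset_of_ncard_le hsub
      rw [h.mid i (by omega) hlt, Set.ncard_pair hne]
    have : v ∈ G.neighborSet (P i) := hadj
    rw [← heq] at this
    rcases this with h1 | h1
    · exact Or.inl h1
    · exact Or.inr ⟨hlt, by simpa using h1⟩


lemma PP.walk_out {s : ℕ} {P : ℕ → V} [Fintype V] (h : PP G s P) :
    ∀ n j (u : V) (Wk : G.Walk (P j) u), Wk.length = n → j ≤ s →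
      (∀ t, 1 ≤ t → t ≤ s → u ≠ P t) → j + G.dist (P 0) u ≤ n := by
  intro n
  induction n using Nat.strong_induction_on with
  | _ n IH =>
    intro j u Wk hlen hjs hu
    rcases Nat.eq_zero_or_pos j with rfl | hj
    · have := SimpleGraph.dist_le Wk
      omega
    · cases Wk with
      | nil => exact absurd rfl (hu j hj hjs)
      | cons ha W =>
        rename_i v
        rw [SimpleGraph.Walk.length_cons] at hlen
        rcases h.nbr j v hj hjs ha with hv | ⟨hjlt, hv⟩
        · subst hv
          have := IH W.length (by omega) (j - 1) u W rfl (by omega) hu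
          omega
        · subst hv
          have := IH W.length (by omega) (j + 1) u W rfl (by omega) hu
          omega

lemma PP.walk_along {s : ℕ} {P : ℕ → V} [Fintype V] (h : PP G s P) (i : ℕ) :
    ∀ n j (u : V) (Wk : G.Walk (P j) u), Wk.length = n → j ≤ s →
      (∀ t, i < t → t ≤ s → u ≠ P t) → j ≤ n + i := by
  intro n
  induction n using Nat.strong_induction_on with
  | _ n IH =>
    intro j u Wk hlen hjs hu
    rcases le_or_gt j i with hji | hji
    · omega
    · cases Wk with
      | nil => exact absurd rfl (hu j hji hjs)
      | cons ha W =>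
        rename_i v
        rw [SimpleGraph.Walk.length_cons] at hlen
        rcases h.nbr j v (by omega) hjs ha with hv | ⟨hjlt, hv⟩
        · subst hv
          have := IH W.length (by omega) (j - 1) u W rfl (by omega) hu
          omega
        · subst hv
          have := IH W.length (by omega) (j + 1) u W rfl (by omega) hu
          omega

lemma PP.dist_le_add {s : ℕ} {P : ℕ → V} (h : PP G s P) (hG : G.Connected) :
    ∀ k i, i + k ≤ s → G.dist (P i) (P (i + k)) ≤ k := by
  intro k
  induction k with
  | zero => simp
  | succ k IHk =>
    intro i hik
    have h1 : G.dist (P i) (P (i + k)) ≤ k := IHk i (by omega)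
    have h2 : G.dist (P (i + k)) (P (i + k + 1)) = 1 :=
      SimpleGraph.dist_eq_one_iff_adj.mpr (h.adj (i + k) (by omega))
    have h3 := hG.dist_triangle (u := P i) (v := P (i + k)) (w := P (i + k + 1))
    have : i + (k + 1) = i + k + 1 := by omega
    rw [this]
    omega

lemma PP.dist_along {s : ℕ} {P : ℕ → V} [Fintype V] (h : PP G s P) (hG : G.Connected)
    {i j : ℕ} (hij : i ≤ j) (hjs : j ≤ s) : G.dist (P i) (P j) = j - i := by
  have hle : G.dist (P i) (P j) ≤ j - i := by
    have h1 := h.dist_le_add hG (j - i) i (by omega)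
    have hiji : i + (j - i) = j := by omega
    rwa [hiji] at h1
  have hge : j ≤ G.dist (P j) (P i) + i := by
    obtain ⟨W, hW⟩ := hG.exists_walk_length_eq_dist (P j) (P i)
    have hne : ∀ t, i < t → t ≤ s → P i ≠ P t := by
      intro t ht hts hEq
      have := h.inj (le_trans hij hjs) hts hEq
      omega
    have := h.walk_along i W.length j (P i) W rfl hjs hne
    omega
  rw [SimpleGraph.dist_comm (u := P j) (v := P i)] at hge
  omega

lemma PP.dist_out {s : ℕ} {P : ℕ → V} [Fintype V] (h : PP G s P) (hG : G.Connected)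
    {u : V} {j : ℕ} (hjs : j ≤ s) (hu : ∀ t, 1 ≤ t → t ≤ s → u ≠ P t) :
    G.dist u (P j) = G.dist u (P 0) + j := by
  have h0 : G.dist (P 0) (P j) = j := by
    have := h.dist_along hG (Nat.zero_le j) hjs
    omega
  have hle : G.dist u (P j) ≤ G.dist u (P 0) + j := by
    have h3 := hG.dist_triangle (u := u) (v := P 0) (w := P j)
    omega
  have hge : j + G.dist (P 0) u ≤ G.dist (P j) u := by
    obtain ⟨W, hW⟩ := hG.exists_walk_length_eq_dist (P j) u
    have := h.walk_out W.length j u W rfl hjs hu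
    omega
  rw [SimpleGraph.dist_comm (u := P j) (v := u),
      SimpleGraph.dist_comm (u := P 0) (v := u)] at hge
  omega


lemma PP.deg_le {s : ℕ} {P : ℕ → V} (h : PP G s P) :
    ∀ i, 1 ≤ i → i ≤ s → (G.neighborSet (P i)).ncard ≤ 2 := by
  intro i h1 h2
  rcases eq_or_lt_of_le h2 with heq | hlt
  · subst heq; rw [h.last]; omega
  · rw [h.mid i (by omega) hlt]

section TwoPaths

variable [Fintype V] {l m : ℕ} {P Q : ℕ → V}
variable (hp : PP G l P) (hq : PP G m Q) (hadj : G.Adj (P 0) (Q 0))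

include hp hq hadj in
lemma two_disjoint : ∀ i, i ≤ l → ∀ k, k ≤ m → P i ≠ Q k := by
  intro i
  induction i using Nat.strong_induction_on with
  | _ i IH =>
    intro hil k hkm hEq
    rcases Nat.eq_zero_or_pos i with rfl | hi
    · rcases Nat.eq_zero_or_pos k with rfl | hk
      · exact G.ne_of_adj hadj hEq
      · have h1 := hp.root
        rw [hEq] at h1
        have h2 := hq.deg_le k hk hkm
        omega
    · rcases Nat.eq_zero_or_pos k with rfl | hk
      · have h1 := hq.root
        rw [← hEq] at h1
        have h2 := hp.deg_le i hi hil
        omega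
      · have hadj' : G.Adj (Q k) (P (i - 1)) := by
          have h3 := hp.adj (i - 1) (by omega)
          have h4 : i - 1 + 1 = i := by omega
          rw [h4] at h3
          rw [← hEq]
          exact h3.symm
        rcases hq.nbr k (P (i - 1)) hk hkm hadj' with h1 | ⟨hklt, h1⟩
        · exact IH (i - 1) (by omega) (by omega) (k - 1) (by omega) h1
        · exact IH (i - 1) (by omega) (by omega) (k + 1) (by omega) h1

include hp hq hadj in
lemma two_dist (hG : G.Connected) :
    ∀ i k, i ≤ l → k ≤ m → G.dist (P i) (Q k) = i + 1 + k := by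
  intro i k hil hkm
  have hdisj := two_disjoint hp hq hadj
  have h1 : G.dist (P i) (Q k) = G.dist (P i) (Q 0) + k := by
    apply hq.dist_out hG hkm
    intro t h1t hts
    exact hdisj i hil t hts
  have h2 : G.dist (Q 0) (P i) = G.dist (Q 0) (P 0) + i := by
    apply hp.dist_out hG hil
    intro t h1t hts hEq
    exact hdisj t hts 0 (Nat.zero_le m) hEq.symm
  have h3 : G.dist (P 0) (Q 0) = 1 := SimpleGraph.dist_eq_one_iff_adj.mpr hadj
  rw [SimpleGraph.dist_comm (u := Q 0) (v := P i),
      SimpleGraph.dist_comm (u := Q 0) (v := P 0)] at h2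
  omega

include hp hq hadj in
lemma exists_z :
    ∃ z, G.Adj (Q 0) z ∧ (∀ i, i ≤ l → z ≠ P i) ∧ (∀ k, k ≤ m → z ≠ Q k) := by
  have hdisj := two_disjoint hp hq hadj
  have hnsub : ¬ (G.neighborSet (Q 0) ⊆ {P 0, Q 1}) := by
    intro hsub
    have h1 : (G.neighborSet (Q 0)).ncard ≤ ({P 0, Q 1} : Set V).ncard :=
      Set.ncard_le_ncard hsub (Set.toFinite _)
    have h2 : ({P 0, Q 1} : Set V).ncard ≤ 2 := Set.ncard_insert_le _ _ |>.trans (by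
      rw [Set.ncard_singleton])
    have h3 := hq.root
    omega
  obtain ⟨z, hz1, hz2⟩ := Set.not_subset.mp hnsub
  have hzP0 : z ≠ P 0 := fun hEq => hz2 (by rw [hEq]; exact Set.mem_insert _ _)
  have hzQ1 : z ≠ Q 1 := fun hEq => hz2 (by rw [hEq]; right; rfl)
  refine ⟨z, hz1, ?_, ?_⟩
  · intro i hil hEq
    rcases Nat.eq_zero_or_pos i with rfl | hi
    · exact hzP0 hEq
    · subst hEq
      have hadj' : G.Adj (P i) (Q 0) := hz1.symm
      rcases hp.nbr i (Q 0) hi hil hadj' with h1 | ⟨hilt, h1⟩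
      · exact hdisj (i - 1) (by omega) 0 (Nat.zero_le m) h1.symm
      · exact hdisj (i + 1) (by omega) 0 (Nat.zero_le m) h1.symm
  · intro k hkm hEq
    rcases Nat.eq_zero_or_pos k with rfl | hk
    · subst hEq; exact G.irrefl hz1
    · rcases eq_or_ne k 1 with rfl | hk1
      · exact hzQ1 hEq
      subst hEq
      have hadj' : G.Adj (Q k) (Q 0) := hz1.symm
      rcases hq.nbr k (Q 0) hk hkm hadj' with h1 | ⟨hklt, h1⟩
      · have := hq.inj (i := 0) (j := k - 1) (Nat.zero_le m) (by omega) h1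
        omega
      · have := hq.inj (i := 0) (j := k + 1) (Nat.zero_le m) (by omega) h1
        omega

end TwoPaths


section Master

variable [Fintype V] {l m : ℕ} {P Q : ℕ → V}

lemma master (hG : G.Connected) (hp : PP G l P) (hq : PP G m Q)
    (hadj : G.Adj (P 0) (Q 0)) (hlm : m < l) (x : V → ℝ) (hx : ∀ v, 0 < x v)
    (Λ : ℝ) (heig : ∀ v : V, ∑ u : V, (G.dist v u : ℝ) * x u = Λ * x v) :
    ∑ k ∈ Finset.range (m + 1), x (Q k) < ∑ i ∈ Finset.range (l + 1), x (P i) := by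
  classical
  set N : ℕ := l + m + 2 with hN
  set w : ℕ → V := fun r => if r ≤ l then P (l - r) else Q (r - l - 1) with hw
  set y : ℕ → ℝ := fun r => x (w r) with hy
  have hwP : ∀ r, r ≤ l → w r = P (l - r) := by
    intro r hr; simp only [hw, if_pos hr]
  have hwQ : ∀ r, l < r → w r = Q (r - l - 1) := by
    intro r hr; simp only [hw]; rw [if_neg (by omega : ¬ r ≤ l)]
  have hdisj := two_disjoint hp hq hadj
  -- (F1) distances within the combined path
  have hdist1 : ∀ r t, r ≤ t → t < N → G.dist (w r) (w t) = t - r := by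
    intro r t hrt htN
    rcases le_or_gt t l with htl | htl
    · rw [hwP r (by omega), hwP t htl]
      have h1 := hp.dist_along hG (i := l - t) (j := l - r) (by omega) (by omega)
      rw [SimpleGraph.dist_comm] at h1
      rw [h1]
      omega
    · rcases le_or_gt r l with hrl | hrl
      · rw [hwP r hrl, hwQ t htl]
        rw [two_dist hp hq hadj hG (l - r) (t - l - 1) (by omega) (by omega)]
        omega
      · rw [hwQ r hrl, hwQ t htl]
        have h1 := hq.dist_along hG (i := r - l - 1) (j := t - l - 1) (by omega) (by omega)
        rw [h1]
        omega
  -- injectivity of w on range N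
  have hwinj : ∀ r t, r < N → t < N → w r = w t → r = t := by
    intro r t hrN htN hEq
    rcases le_or_gt r l with hrl | hrl <;> rcases le_or_gt t l with htl | htl
    · rw [hwP r hrl, hwP t htl] at hEq
      have := hp.inj (i := l - r) (j := l - t) (by omega) (by omega) hEq
      omega
    · rw [hwP r hrl, hwQ t htl] at hEq
      exact absurd hEq (hdisj (l - r) (by omega) (t - l - 1) (by omega))
    · rw [hwQ r hrl, hwP t htl] at hEq
      exact absurd hEq.symm (hdisj (l - t) (by omega) (r - l - 1) (by omega))
    · rw [hwQ r hrl, hwQ t htl] at hEq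
      have := hq.inj (i := r - l - 1) (j := t - l - 1) (by omega) (by omega) hEq
      omega
  set S : Finset V := (Finset.range N).image w with hS
  have hmemS : ∀ u, u ∉ S ↔ ∀ r, r < N → u ≠ w r := by
    intro u
    simp only [hS, Finset.mem_image, Finset.mem_range, not_exists]
    constructor
    · intro h r hr hEq
      exact h r ⟨hr, hEq.symm⟩
    · intro h r ⟨hr, hEq⟩
      exact h r hr hEq.symm
  -- outside vertices
  have houtP : ∀ u, u ∉ S → ∀ t, 1 ≤ t → t ≤ l → u ≠ P t := by
    intro u hu t h1t htl
    have := (hmemS u).mp hu (l - t) (by omega)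
    rwa [hwP (l - t) (by omega), (by omega : l - (l - t) = t)] at this
  have houtQ : ∀ u, u ∉ S → ∀ t, 1 ≤ t → t ≤ m → u ≠ Q t := by
    intro u hu t h1t htm
    have := (hmemS u).mp hu (l + 1 + t) (by omega)
    rwa [hwQ (l + 1 + t) (by omega), (by omega : l + 1 + t - l - 1 = t)] at this
  -- (F2) distances from outside vertices to the path
  have hdout1 : ∀ u, u ∉ S → ∀ r, r ≤ l →
      G.dist (w r) u = G.dist (P 0) u + (l - r) := by
    intro u hu r hrl
    rw [hwP r hrl]
    have h1 := hp.dist_out hG (j := l - r) (u := u) (by omega) (houtP u hu)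
    rw [SimpleGraph.dist_comm (u := P (l - r)) (v := u),
        SimpleGraph.dist_comm (u := P 0) (v := u)]
    omega
  have hdout2 : ∀ u, u ∉ S → ∀ r, l < r → r < N →
      G.dist (w r) u = G.dist (Q 0) u + (r - l - 1) := by
    intro u hu r hlr hrN
    rw [hwQ r hlr]
    have h1 := hq.dist_out hG (j := r - l - 1) (u := u) (by omega) (houtQ u hu)
    rw [SimpleGraph.dist_comm (u := Q (r - l - 1)) (v := u),
        SimpleGraph.dist_comm (u := Q 0) (v := u)]
    omega
  -- triangle facts
  have hPQ1 : G.dist (P 0) (Q 0) = 1 := SimpleGraph.dist_eq_one_iff_adj.mpr hadj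
  have htriP : ∀ u : V, G.dist (P 0) u ≤ G.dist (Q 0) u + 1 := by
    intro u
    have h1 := hG.dist_triangle (u := P 0) (v := Q 0) (w := u)
    omega
  have htriQ : ∀ u : V, G.dist (Q 0) u ≤ G.dist (P 0) u + 1 := by
    intro u
    have h1 := hG.dist_triangle (u := Q 0) (v := P 0) (w := u)
    rw [SimpleGraph.dist_comm (u := Q 0) (v := P 0)] at h1
    omega
  -- sum over S as sum over range N
  have hsum_image : ∀ g : V → ℝ, ∑ u ∈ S, g u = ∑ t ∈ Finset.range N, g (w t) := by
    intro g
    rw [hS, Finset.sum_image]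
    intro a ha b hb hEq
    exact hwinj a b (Finset.mem_range.mp ha) (Finset.mem_range.mp hb) hEq
  -- eigen rows
  have hrow : ∀ r, r < N → Λ * y r =
      (∑ t ∈ Finset.range N, (G.dist (w r) (w t) : ℝ) * y t)
        + ∑ u ∈ Sᶜ, (G.dist (w r) u : ℝ) * x u := by
    intro r hr
    have h0 := (heig (w r)).symm
    rw [← Finset.sum_add_sum_compl S (fun u => (G.dist (w r) u : ℝ) * x u)] at h0
    rw [hsum_image] at h0
    simpa only [hy] using h0
  have hsplit : ∀ (a : ℕ) (g : ℕ → ℝ), a ≤ N → ∑ t ∈ Finset.range N, g t =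
      (∑ t ∈ Finset.range a, g t) + ∑ t ∈ Finset.Ico a N, g t := by
    intro a g haN
    have h1 := Finset.sum_Ico_consecutive g (Nat.zero_le a) haN
    simp only [Finset.range_eq_Ico]
    exact h1.symm
  -- step identities
  have hstep : ∀ r, r + 1 < N →
      Λ * (y (r + 1) - y r) =
        ((∑ t ∈ Finset.range (r + 1), y t) - ∑ t ∈ Finset.Ico (r + 1) N, y t)
          + ∑ u ∈ Sᶜ, ((G.dist (w (r + 1)) u : ℝ) - (G.dist (w r) u : ℝ)) * x u := by
    intro r hrN
    have h1 := hrow (r + 1) hrN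
    have h2 := hrow r (by omega)
    have hpath : (∑ t ∈ Finset.range N, (G.dist (w (r + 1)) (w t) : ℝ) * y t)
        - (∑ t ∈ Finset.range N, (G.dist (w r) (w t) : ℝ) * y t)
        = (∑ t ∈ Finset.range (r + 1), y t) - ∑ t ∈ Finset.Ico (r + 1) N, y t := by
      rw [← Finset.sum_sub_distrib, hsplit (r + 1) _ (by omega)]
      have hA : ∑ t ∈ Finset.range (r + 1),
          ((G.dist (w (r + 1)) (w t) : ℝ) * y t - (G.dist (w r) (w t) : ℝ) * y t)
          = ∑ t ∈ Finset.range (r + 1), y t := by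
        apply Finset.sum_congr rfl
        intro t ht
        have htr := Finset.mem_range.mp ht
        have e1 : G.dist (w (r + 1)) (w t) = r + 1 - t := by
          rw [SimpleGraph.dist_comm]; exact hdist1 t (r + 1) (by omega) hrN
        have e2 : G.dist (w r) (w t) = r - t := by
          rw [SimpleGraph.dist_comm]; exact hdist1 t r (by omega) (by omega)
        rw [e1, e2, Nat.cast_sub (by omega : t ≤ r + 1), Nat.cast_sub (by omega : t ≤ r)]
        push_cast
        ring
      have hB : ∑ t ∈ Finset.Ico (r + 1) N,
          ((G.dist (w (r + 1)) (w t) : ℝ) * y t - (G.dist (w r) (w t) : ℝ) * y t)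
          = - ∑ t ∈ Finset.Ico (r + 1) N, y t := by
        rw [← Finset.sum_neg_distrib]
        apply Finset.sum_congr rfl
        intro t ht
        have htr := Finset.mem_Ico.mp ht
        have e1 : G.dist (w (r + 1)) (w t) = t - (r + 1) := by
          exact hdist1 (r + 1) t (by omega) (by omega)
        have e2 : G.dist (w r) (w t) = t - r := by
          exact hdist1 r t (by omega) (by omega)
        rw [e1, e2, Nat.cast_sub (by omega : r + 1 ≤ t), Nat.cast_sub (by omega : r ≤ t)]
        push_cast
        ring
      rw [hA, hB]
      ring
    have hR : (∑ u ∈ Sᶜ, (G.dist (w (r + 1)) u : ℝ) * x u)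
        - ∑ u ∈ Sᶜ, (G.dist (w r) u : ℝ) * x u
        = ∑ u ∈ Sᶜ, ((G.dist (w (r + 1)) u : ℝ) - (G.dist (w r) u : ℝ)) * x u := by
      rw [← Finset.sum_sub_distrib]
      apply Finset.sum_congr rfl
      intro u _
      ring
    rw [mul_sub, h1, h2]
    linarith [hpath, hR]
  -- R-coefficient evaluations
  have hcoefA : ∀ r, r + 1 ≤ l → ∀ u, u ∉ S →
      (G.dist (w (r + 1)) u : ℝ) - (G.dist (w r) u : ℝ) = -1 := by
    intro r hrl u hu
    rw [hdout1 u hu (r + 1) hrl, hdout1 u hu r (by omega),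
        (by omega : l - r = (l - (r + 1)) + 1)]
    push_cast
    ring
  have hcoefB : ∀ u, u ∉ S →
      (G.dist (w (l + 1)) u : ℝ) - (G.dist (w l) u : ℝ) =
        (G.dist (Q 0) u : ℝ) - (G.dist (P 0) u : ℝ) := by
    intro u hu
    rw [hdout2 u hu (l + 1) (by omega) (by omega), hdout1 u hu l (le_refl l)]
    push_cast
    simp
  have hcoefC : ∀ r, l + 1 ≤ r → r + 1 < N → ∀ u, u ∉ S →
      (G.dist (w (r + 1)) u : ℝ) - (G.dist (w r) u : ℝ) = 1 := by
    intro r hlr hrN u hu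
    rw [hdout2 u hu (r + 1) (by omega) hrN, hdout2 u hu r (by omega) (by omega),
        (by omega : r + 1 - l - 1 = (r - l - 1) + 1)]
    push_cast
    ring
  -- special outside vertex z
  obtain ⟨z, hz1, hz2, hz3⟩ := exists_z hp hq hadj
  have hzS : z ∉ S := by
    rw [hmemS]
    intro r hrN
    rcases le_or_gt r l with hrl | hrl
    · rw [hwP r hrl]; exact hz2 (l - r) (by omega)
    · rw [hwQ r hrl]; exact hz3 (r - l - 1) (by omega)
  have hz_dQ : G.dist (Q 0) z = 1 := SimpleGraph.dist_eq_one_iff_adj.mpr hz1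
  have hz_dP : 1 ≤ G.dist (P 0) z := by
    have h1 : P 0 ≠ z := fun hEq => hz2 0 (Nat.zero_le l) hEq.symm
    have := hG.pos_dist_of_ne h1
    omega
  set XR : ℝ := ∑ u ∈ Sᶜ, x u with hXR
  set sR : ℝ := ∑ u ∈ Sᶜ, ((1 : ℝ) + (G.dist (P 0) u : ℝ) - (G.dist (Q 0) u : ℝ)) * x u
    with hsR
  have hXR_pos : 0 < XR := by
    apply Finset.sum_pos'
    · intro u _; exact (hx u).le
    · exact ⟨z, Finset.mem_compl.mpr hzS, hx z⟩
  have hcoef_nonneg : ∀ u : V, 0 ≤ (1 : ℝ) + (G.dist (P 0) u : ℝ) - (G.dist (Q 0) u : ℝ) := by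
    intro u
    have h1 := htriQ u
    have h2 : (G.dist (Q 0) u : ℝ) ≤ (G.dist (P 0) u : ℝ) + 1 := by
      exact_mod_cast Nat.cast_le.mpr h1
    linarith
  have hsR_pos : 0 < sR := by
    apply Finset.sum_pos'
    · intro u _
      exact mul_nonneg (hcoef_nonneg u) (hx u).le
    · refine ⟨z, Finset.mem_compl.mpr hzS, ?_⟩
      apply mul_pos _ (hx z)
      rw [hz_dQ]
      have : (1 : ℝ) ≤ (G.dist (P 0) z : ℝ) := by exact_mod_cast hz_dP
      push_cast
      linarith
  -- reflection differences
  set ν : ℕ → ℝ := fun r => y r - y (N - 1 - r) with hνdef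
  set Sig : ℕ → ℝ := fun r => ∑ t ∈ Finset.range (r + 1), ν t with hSigdef
  set rh : ℕ := N / 2 - 1 with hrh
  have hm_le_rh : m ≤ rh := by omega
  have hrh_lt : rh + 1 < N := by omega
  -- pairing lemma
  have hPL : ∀ r, r ≤ rh →
      (∑ t ∈ Finset.range (r + 1), y t) - (∑ t ∈ Finset.Ico (N - 1 - r) N, y t) = Sig r := by
    intro r hr
    have hrefl : ∑ t ∈ Finset.Ico (N - 1 - r) N, y t
        = ∑ t ∈ Finset.range (r + 1), y (N - 1 - t) := by
      apply Finset.sum_nbij' (i := fun t => N - 1 - t) (j := fun t => N - 1 - t)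
      · intro a ha
        have := Finset.mem_Ico.mp ha
        rw [Finset.mem_range]
        omega
      · intro a ha
        have := Finset.mem_range.mp ha
        rw [Finset.mem_Ico]
        omega
      · intro a ha
        have := Finset.mem_Ico.mp ha
        omega
      · intro a ha
        have := Finset.mem_range.mp ha
        omega
      · intro a ha
        have := Finset.mem_Ico.mp ha
        congr 1
        omega
    rw [hrefl, ← Finset.sum_sub_distrib]
  -- epsilon
  set ε : ℕ → ℝ := fun r => if r < m then 0 else if r = m then sR else 2 * XR with hεdef
  have hεnn : ∀ r, 0 ≤ ε r := by
    intro r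
    simp only [hεdef]
    split
    · exact le_refl 0
    · split
      · exact hsR_pos.le
      · positivity
  -- the main recursion (E2)
  have hE2 : ∀ r, r < rh → Λ * (ν (r + 1) - ν r) = 2 * Sig r - ε r := by
    intro r hr
    have hb1 : r + 1 < N := by omega
    have hb2 : (N - 2 - r) + 1 < N := by omega
    have hs1 := hstep r hb1
    have hs2 := hstep (N - 2 - r) hb2
    rw [(by omega : N - 2 - r + 1 = N - 1 - r)] at hs2
    have hν1 : ν (r + 1) - ν r = (y (r + 1) - y r) + (y (N - 1 - r) - y (N - 2 - r)) := by
      simp only [hνdef]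
      rw [(by omega : N - 1 - (r + 1) = N - 2 - r)]
      ring
    have hmid1 : ∑ t ∈ Finset.range (N - 1 - r), y t
        = (∑ t ∈ Finset.range (r + 1), y t) + ∑ t ∈ Finset.Ico (r + 1) (N - 1 - r), y t := by
      have h1 := Finset.sum_Ico_consecutive y (Nat.zero_le (r + 1)) (by omega : r + 1 ≤ N - 1 - r)
      simp only [Finset.range_eq_Ico]
      exact h1.symm
    have hmid2 : ∑ t ∈ Finset.Ico (r + 1) N, y t
        = (∑ t ∈ Finset.Ico (r + 1) (N - 1 - r), y t) + ∑ t ∈ Finset.Ico (N - 1 - r) N, y t :=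
      (Finset.sum_Ico_consecutive y (by omega : r + 1 ≤ N - 1 - r) (by omega : N - 1 - r ≤ N)).symm
    have hPLr := hPL r (by omega)
    -- R-sums
    have hRAB : (∑ u ∈ Sᶜ, ((G.dist (w (r + 1)) u : ℝ) - (G.dist (w r) u : ℝ)) * x u)
        + (∑ u ∈ Sᶜ, ((G.dist (w (N - 1 - r)) u : ℝ) - (G.dist (w (N - 2 - r)) u : ℝ)) * x u)
        = - ε r := by
      rw [← Finset.sum_add_distrib]
      rcases lt_trichotomy r m with hrm | hrm | hrm
      · have hεr : ε r = 0 := by simp only [hεdef, if_pos hrm]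
        rw [hεr, neg_zero]
        apply Finset.sum_eq_zero
        intro u hu
        have huS := Finset.mem_compl.mp hu
        rw [hcoefA r (by omega) u huS]
        rw [(by omega : N - 1 - r = (N - 2 - r) + 1)]
        rw [hcoefC (N - 2 - r) (by omega) (by omega) u huS]
        ring
      · have hεr : ε r = sR := by
          simp only [hεdef]
          rw [if_neg (by omega), if_pos hrm]
        rw [hεr, hsR, ← Finset.sum_neg_distrib]
        apply Finset.sum_congr rfl
        intro u hu
        have huS := Finset.mem_compl.mp hu
        rw [hcoefA r (by omega) u huS]
        rw [(by omega : N - 1 - r = l + 1), (by omega : N - 2 - r = l)]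
        rw [hcoefB u huS]
        ring
      · have hεr : ε r = 2 * XR := by
          simp only [hεdef]
          rw [if_neg (by omega), if_neg (by omega)]
        rw [hεr]
        have h1 : ∀ u ∈ Sᶜ, ((G.dist (w (r + 1)) u : ℝ) - (G.dist (w r) u : ℝ)) * x u
            + ((G.dist (w (N - 1 - r)) u : ℝ) - (G.dist (w (N - 2 - r)) u : ℝ)) * x u
            = (-2) * x u := by
          intro u hu
          have huS := Finset.mem_compl.mp hu
          rw [hcoefA r (by omega) u huS]
          rw [(by omega : N - 1 - r = (N - 2 - r) + 1)]
          rw [hcoefA (N - 2 - r) (by omega) u huS]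
          ring
        rw [Finset.sum_congr rfl h1, ← Finset.mul_sum, hXR]
        ring
    rw [hν1, mul_add, hs1, hs2]
    rw [hSigdef] at hPLr ⊢
    linarith [hPLr, hmid1, hmid2, hRAB]
  -- positivity of the eigenvalue
  have hΛpos : 0 < Λ := by
    have h0 := heig (P 0)
    have hge : (1 : ℝ) * x (Q 0) ≤ ∑ u : V, (G.dist (P 0) u : ℝ) * x u := by
      have h1 : (G.dist (P 0) (Q 0) : ℝ) * x (Q 0) ≤ ∑ u : V, (G.dist (P 0) u : ℝ) * x u :=
        Finset.single_le_sum (f := fun u => (G.dist (P 0) u : ℝ) * x u)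
          (fun u _ => mul_nonneg (Nat.cast_nonneg _) (hx u).le) (Finset.mem_univ (Q 0))
      rw [hPQ1] at h1
      simpa using h1
    rw [h0] at hge
    nlinarith [hx (P 0), hx (Q 0)]
  -- boundary identity
  have hT : ∃ γ : ℝ, 0 < γ ∧ 0 < Λ * ν rh + γ * Sig rh := by
    by_cases hpar : N % 2 = 0
    · -- N even
      have e1 : N - 1 - rh = rh + 1 := by omega
      have hs := hstep rh (by omega)
      have hPLr := hPL rh (le_refl rh)
      rw [e1] at hPLr
      have hRc : ∑ u ∈ Sᶜ, ((G.dist (w (rh + 1)) u : ℝ) - (G.dist (w rh) u : ℝ)) * x u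
          = -XR := by
        rw [hXR, ← Finset.sum_neg_distrib]
        apply Finset.sum_congr rfl
        intro u hu
        rw [hcoefA rh (by omega) u (Finset.mem_compl.mp hu)]
        ring
      refine ⟨1, one_pos, ?_⟩
      have hν_eq : ν rh = -(y (rh + 1) - y rh) := by
        simp only [hνdef]
        rw [e1]
        ring
      have hmul : Λ * ν rh = -(Λ * (y (rh + 1) - y rh)) := by rw [hν_eq]; ring
      rw [hRc] at hs
      linarith [hPLr, hXR_pos, hs, hmul]
    · -- N odd
      have e1 : N - 1 - rh = rh + 2 := by omega
      have hs1 := hstep rh (by omega)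
      have hs2 := hstep (rh + 1) (by omega)
      have hPLr := hPL rh (le_refl rh)
      rw [e1] at hPLr
      have hbr1 : ∑ t ∈ Finset.range (rh + 1 + 1), y t
          = (∑ t ∈ Finset.range (rh + 1), y t) + y (rh + 1) := Finset.sum_range_succ y (rh + 1)
      have hbr2 : ∑ t ∈ Finset.Ico (rh + 1) N, y t
          = y (rh + 1) + ∑ t ∈ Finset.Ico (rh + 1 + 1) N, y t :=
        Finset.sum_eq_sum_Ico_succ_bot (by omega) y
      have hν_eq : Λ * ν rh = -(Λ * (y (rh + 1 + 1) - y (rh + 1)) + Λ * (y (rh + 1) - y rh)) := by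
        simp only [hνdef]
        rw [e1, (by omega : rh + 1 + 1 = rh + 2)]
        ring
      by_cases hlm1 : l = m + 1
      · -- rh = m, second step touches the root pair
        have hRc1 : ∑ u ∈ Sᶜ, ((G.dist (w (rh + 1)) u : ℝ) - (G.dist (w rh) u : ℝ)) * x u
            = -XR := by
          rw [hXR, ← Finset.sum_neg_distrib]
          apply Finset.sum_congr rfl
          intro u hu
          rw [hcoefA rh (by omega) u (Finset.mem_compl.mp hu)]
          ring
        have hRc2 : ∑ u ∈ Sᶜ,
            ((G.dist (w (rh + 1 + 1)) u : ℝ) - (G.dist (w (rh + 1)) u : ℝ)) * x u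
            = -(sR - XR) := by
          rw [hsR, hXR, ← Finset.sum_sub_distrib, ← Finset.sum_neg_distrib]
          apply Finset.sum_congr rfl
          intro u hu
          rw [(by omega : rh + 1 + 1 = l + 1), (by omega : rh + 1 = l)]
          rw [hcoefB u (Finset.mem_compl.mp hu)]
          ring
        refine ⟨2, by norm_num, ?_⟩
        rw [hRc1] at hs1
        rw [hRc2] at hs2
        linarith [hPLr, hsR_pos, hs1, hs2, hν_eq, hbr1, hbr2]
      · -- l ≥ m + 3
        have hRc1 : ∑ u ∈ Sᶜ, ((G.dist (w (rh + 1)) u : ℝ) - (G.dist (w rh) u : ℝ)) * x u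
            = -XR := by
          rw [hXR, ← Finset.sum_neg_distrib]
          apply Finset.sum_congr rfl
          intro u hu
          rw [hcoefA rh (by omega) u (Finset.mem_compl.mp hu)]
          ring
        have hRc2 : ∑ u ∈ Sᶜ,
            ((G.dist (w (rh + 1 + 1)) u : ℝ) - (G.dist (w (rh + 1)) u : ℝ)) * x u
            = -XR := by
          rw [hXR, ← Finset.sum_neg_distrib]
          apply Finset.sum_congr rfl
          intro u hu
          rw [hcoefA (rh + 1) (by omega) u (Finset.mem_compl.mp hu)]
          ring
        refine ⟨2, by norm_num, ?_⟩
        rw [hRc1] at hs1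
        rw [hRc2] at hs2
        linarith [hPLr, hXR_pos, hs1, hs2, hν_eq, hbr1, hbr2]
  -- first induction : ν 0 > 0
  have hν0 : 0 < ν 0 := by
    by_contra hc
    push_neg at hc
    have hind : ∀ r, r ≤ rh → ν r ≤ 0 ∧ Sig r ≤ 0 := by
      intro r
      induction r with
      | zero =>
        intro _
        refine ⟨hc, ?_⟩
        have : Sig 0 = ν 0 := by simp [hSigdef]
        linarith
      | succ r IH =>
        intro hr
        obtain ⟨h1, h2⟩ := IH (by omega)
        have hE := hE2 r (by omega)
        have hν1 : ν (r + 1) ≤ 0 := by nlinarith [hΛpos, hεnn r]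
        have hSs : Sig (r + 1) = Sig r + ν (r + 1) := by
          simp only [hSigdef, Finset.sum_range_succ]
        exact ⟨hν1, by rw [hSs]; linarith⟩
    obtain ⟨h1, h2⟩ := hind rh (le_refl rh)
    obtain ⟨γ, hγ, hTT⟩ := hT
    nlinarith [hΛpos]
  -- second induction : positivity up to m
  have hpos : ∀ r, r ≤ m → 0 < ν r ∧ 0 < Sig r := by
    intro r
    induction r with
    | zero =>
      intro _
      refine ⟨hν0, ?_⟩
      have : Sig 0 = ν 0 := by simp [hSigdef]
      linarith
    | succ r IH =>
      intro hr
      obtain ⟨h1, h2⟩ := IH (by omega)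
      have hE := hE2 r (by omega)
      have hεr : ε r = 0 := by simp only [hεdef, if_pos (show r < m by omega)]
      rw [hεr] at hE
      have hν1 : 0 < ν (r + 1) := by nlinarith [hΛpos]
      have hSs : Sig (r + 1) = Sig r + ν (r + 1) := by
        simp only [hSigdef, Finset.sum_range_succ]
      exact ⟨hν1, by rw [hSs]; linarith⟩
  -- conclusion
  have hA : ∑ r ∈ Finset.range (l + 1), y r = ∑ i ∈ Finset.range (l + 1), x (P i) := by
    rw [← Finset.sum_range_reflect (fun i => x (P i)) (l + 1)]
    apply Finset.sum_congr rfl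
    intro r hr
    have hrl := Finset.mem_range.mp hr
    simp only [hy]
    rw [hwP r (by omega), (by omega : l + 1 - 1 - r = l - r)]
  have hB : ∑ r ∈ Finset.Ico (l + 1) N, y r = ∑ k ∈ Finset.range (m + 1), x (Q k) := by
    rw [Finset.sum_Ico_eq_sum_range]
    rw [(by omega : N - (l + 1) = m + 1)]
    apply Finset.sum_congr rfl
    intro k hk
    simp only [hy]
    rw [hwQ (l + 1 + k) (by omega), (by omega : l + 1 + k - l - 1 = k)]
  have hsplitA : ∑ r ∈ Finset.range (l + 1), y r
      = (∑ r ∈ Finset.range (m + 1), y r) + ∑ r ∈ Finset.Ico (m + 1) (l + 1), y r := by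
    have h1 := Finset.sum_Ico_consecutive y (Nat.zero_le (m + 1)) (by omega : m + 1 ≤ l + 1)
    simp only [Finset.range_eq_Ico]
    exact h1.symm
  have hPLm := hPL m hm_le_rh
  rw [(by omega : N - 1 - m = l + 1)] at hPLm
  have hMid : 0 ≤ ∑ r ∈ Finset.Ico (m + 1) (l + 1), y r := by
    apply Finset.sum_nonneg
    intro r _
    simp only [hy]
    exact (hx _).le
  obtain ⟨hnum, hSm⟩ := hpos m (le_refl m)
  rw [← hA, ← hB]
  linarith [hPLm, hMid, hSm, hsplitA]

end Master

lemma toPP {V : Type} [Fintype V] {G : SimpleGraph V} {s : ℕ} {p : Fin (s + 1) → V}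
    (hp : IsPendantPath G s p) :
    PP G s (fun i => if h : i ≤ s then p ⟨i, Nat.lt_succ_of_le h⟩ else p 0) := by
  have hPeq : ∀ (i : ℕ) (h : i ≤ s),
      (if h : i ≤ s then p ⟨i, Nat.lt_succ_of_le h⟩ else p 0) = p ⟨i, Nat.lt_succ_of_le h⟩ := by
    intro i h
    rw [dif_pos h]
  constructor
  · exact hp.len_pos
  · intro i j hi hj hEq
    rw [hPeq i hi, hPeq j hj] at hEq
    have := hp.inj hEq
    exact congrArg Fin.val this
  · intro i hi
    rw [hPeq i (by omega), hPeq (i + 1) (by omega)]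
    convert hp.adj ⟨i, hi⟩ using 2
    all_goals (ext; simp)
  · rw [hPeq 0 (Nat.zero_le s)]
    have e : p ⟨0, Nat.lt_succ_of_le (Nat.zero_le s)⟩ = p 0 :=
      congrArg p (Fin.ext (by simp))
    rw [e]
    exact hp.root_deg
  · rw [hPeq s (le_refl s)]
    have e : p ⟨s, Nat.lt_succ_of_le (le_refl s)⟩ = p (Fin.last s) :=
      congrArg p (Fin.ext (by simp [Fin.last]))
    rw [e]
    exact hp.last_deg
  · intro i h0 his
    rw [hPeq i (by omega)]
    exact hp.mid_deg ⟨i, by omega⟩ h0 his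

end PendantProofAux

/-- If `P_l` (of length `l`, root `p 0`) and `P_m` (of length `m`,
root `q 0`) are pendant paths of a connected graph `G` whose roots are adjacent and
`l > m`, and `x` is a positive eigenvector of the distance matrix for `Λ₁(G)`,
then `∑_{j ∈ V(P_l)} x_j > ∑_{j ∈ V(P_m)} x_j`. -/
theorem sum_pendantPath_lt_sum_pendantPath {V : Type} [Fintype V] (G : SimpleGraph V)
    (hG : G.Connected) (l m : ℕ) (p : Fin (l + 1) → V) (q : Fin (m + 1) → V)
    (hp : IsPendantPath G l p) (hq : IsPendantPath G m q)
    (hadj : G.Adj (p 0) (q 0)) (hlm : m < l)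
    (x : V → ℝ) (hx : ∀ w, 0 < x w)
    (heig : (distMatrix G).mulVec x = distSpectralRadius G • x) :
    ∑ j : Fin (m + 1), x (q j) < ∑ j : Fin (l + 1), x (p j) := by
  classical
  have hL : ∀ v : V, ∑ u : V, (G.dist v u : ℝ) * x u = distSpectralRadius G * x v := by
    intro v
    have h0 := congrFun heig v
    simpa [distMatrix, Matrix.mulVec, dotProduct] using h0
  have hP := PendantProofAux.toPP hp
  have hQ := PendantProofAux.toPP hq
  have hadjPQ : G.Adj ((fun i => if h : i ≤ l then p ⟨i, Nat.lt_succ_of_le h⟩ else p 0) 0)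
      ((fun k => if h : k ≤ m then q ⟨k, Nat.lt_succ_of_le h⟩ else q 0) 0) := by
    have e1 : (fun i => if h : i ≤ l then p ⟨i, Nat.lt_succ_of_le h⟩ else p 0) 0 = p 0 := by
      simp only [dif_pos (Nat.zero_le l)]
      exact congrArg p (Fin.ext (by simp))
    have e2 : (fun k => if h : k ≤ m then q ⟨k, Nat.lt_succ_of_le h⟩ else q 0) 0 = q 0 := by
      simp only [dif_pos (Nat.zero_le m)]
      exact congrArg q (Fin.ext (by simp))
    rw [e1, e2]
    exact hadj
  have key := PendantProofAux.master hG hP hQ hadjPQ hlm x hx (distSpectralRadius G) hL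
  have hA : ∑ i ∈ Finset.range (l + 1),
      x ((fun i => if h : i ≤ l then p ⟨i, Nat.lt_succ_of_le h⟩ else p 0) i)
      = ∑ j : Fin (l + 1), x (p j) := by
    rw [← Fin.sum_univ_eq_sum_range]
    apply Finset.sum_congr rfl
    intro j _
    have hjl : (j : ℕ) ≤ l := Nat.lt_succ_iff.mp j.isLt
    simp only [dif_pos hjl]
  have hB : ∑ k ∈ Finset.range (m + 1),
      x ((fun k => if h : k ≤ m then q ⟨k, Nat.lt_succ_of_le h⟩ else q 0) k)
      = ∑ j : Fin (m + 1), x (q j) := by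
    rw [← Fin.sum_univ_eq_sum_range]
    apply Finset.sum_congr rfl
    intro j _
    have hjm : (j : ℕ) ≤ m := Nat.lt_succ_iff.mp j.isLt
    simp only [dif_pos hjm]
  rw [hA, hB] at key
  exact key
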